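/- Let a : ℝ → ℝ be Lipschitz and v : ℝ → ℝ Schwartz. Then ∫_ℝ a(x) v(x) v'(x) dx = -(1/2) ∫_ℝ a'(x) v(x)² dx. -/

import Mathlib

open scoped NNReal
open MeasureTheory Filter Topology

private lemma tt_negmap : Tendsto (fun h : ℝ => -h) (𝓝[≠] (0:ℝ)) (𝓝[≠] (0:ℝ)) := by
  apply tendsto_nhdsWithin_iff.2
  constructor
  · have : Tendsto (fun h : ℝ => -h) (𝓝 (0:ℝ)) (𝓝 (0:ℝ)) := by
      simpa using (continuous_neg.tendsto (0:ℝ))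
    exact this.mono_left nhdsWithin_le_nhds
  · filter_upwards [self_mem_nhdsWithin] with h hh
    simpa using hh

private lemma tt_aside (a : ℝ → ℝ) (x : ℝ) (hx : DifferentiableAt ℝ a x) :
    Tendsto (fun h : ℝ => (a (x - h) - a x) / h) (𝓝[≠] (0:ℝ)) (𝓝 (-(deriv a x))) := by
  have hs : Tendsto (fun t : ℝ => t⁻¹ • (a (x + t) - a x)) (𝓝[≠] (0:ℝ)) (𝓝 (deriv a x)) :=
    hasDerivAt_iff_tendsto_slope_zero.1 hx.hasDerivAt
  have := (hs.comp tt_negmap).neg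
  refine this.congr fun h => ?_
  simp only [Function.comp_apply, smul_eq_mul]
  rw [← sub_eq_add_neg, inv_neg]
  ring

private lemma tt_gside (g : ℝ → ℝ) (x : ℝ) (hx : DifferentiableAt ℝ g x) :
    Tendsto (fun h : ℝ => (g (x + h) - g x) / h) (𝓝[≠] (0:ℝ)) (𝓝 (deriv g x)) := by
  have hs := hasDerivAt_iff_tendsto_slope_zero.1 hx.hasDerivAt
  refine hs.congr fun h => ?_
  simp [smul_eq_mul, div_eq_inv_mul]

private lemma tt_lin_growth (K : ℝ≥0) {a : ℝ → ℝ} (ha : LipschitzWith K a) (x : ℝ) :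
    ‖a x‖ ≤ ‖a 0‖ + K * ‖x‖ := by
  have h := ha.norm_sub_le x 0
  simp only [sub_zero] at h
  have h2 := norm_sub_norm_le (a x) (a 0)
  linarith

private lemma tt_shift_integrable (K : ℝ≥0) {a : ℝ → ℝ} (ha : LipschitzWith K a)
    {g : ℝ → ℝ} (hgc : Continuous g) (hgi : Integrable g)
    (hgi1 : Integrable (fun x => ‖x‖ * ‖g x‖)) (c : ℝ) :
    Integrable (fun x => a x * g (x + c)) := by
  have hc : Continuous a := ha.continuous
  have key : Integrable (fun y => (‖a 0‖ + K * ‖c‖ + K * ‖y‖) * ‖g y‖) := by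
    have h1 : Integrable (fun y => (‖a 0‖ + K * ‖c‖) * ‖g y‖) := hgi.norm.const_mul _
    have h2 : Integrable (fun y => (K : ℝ) * (‖y‖ * ‖g y‖)) := hgi1.const_mul _
    refine (h1.add h2).congr (Eventually.of_forall fun y => ?_)
    simp only [Pi.add_apply]; ring
  have keyc : Integrable (fun x => (‖a 0‖ + K * ‖c‖ + K * ‖x + c‖) * ‖g (x + c)‖) := by
    simpa using key.comp_add_right c
  refine keyc.mono'
    ((hc.mul (hgc.comp (continuous_id.add continuous_const))).aestronglyMeasurable) ?_
  filter_upwards with x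
  have hax : ‖a x‖ ≤ ‖a 0‖ + K * ‖x‖ := tt_lin_growth K ha x
  have hx : ‖x‖ ≤ ‖c‖ + ‖x + c‖ := by
    have : ‖x‖ = ‖x + c - c‖ := by ring_nf
    rw [this]
    have := norm_sub_le (x + c) c
    linarith
  rw [norm_mul]
  have h0 : (0:ℝ) ≤ ‖g (x + c)‖ := norm_nonneg _
  refine mul_le_mul_of_nonneg_right ?_ h0
  calc ‖a x‖ ≤ ‖a 0‖ + K * ‖x‖ := hax
    _ ≤ ‖a 0‖ + K * (‖c‖ + ‖x + c‖) := by gcongr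
    _ = ‖a 0‖ + K * ‖c‖ + K * ‖x + c‖ := by ring

/-- Key integration-by-parts identity for Lipschitz `a` and a differentiable `g`
with cubic decay of the derivative. -/
private lemma tt_key (K : ℝ≥0) (a : ℝ → ℝ) (ha : LipschitzWith K a)
    (g : ℝ → ℝ) (hg : Differentiable ℝ g)
    {C : ℝ} (hC : ∀ x : ℝ, (1 + ‖x‖) ^ 3 * ‖deriv g x‖ ≤ C)
    (hgi : Integrable g) (hgi1 : Integrable (fun x => ‖x‖ * ‖g x‖)) :
    ∫ x : ℝ, a x * deriv g x = - ∫ x : ℝ, deriv a x * g x := by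
  have hca : Continuous a := ha.continuous
  have hcg : Continuous g := hg.continuous
  have hshift := tt_shift_integrable K ha hcg hgi hgi1
  have hI0 : Integrable (fun x => a x * g x) := by simpa using hshift 0
  -- Step B : the two difference-quotient integrals agree
  have hBeq : ∀ h : ℝ, (∫ x : ℝ, a x * ((g (x + h) - g x) / h))
      = ∫ x : ℝ, ((a (x - h) - a x) / h) * g x := by
    intro h
    have e1 : (∫ x : ℝ, a x * g (x + h)) = ∫ x : ℝ, a (x - h) * g x := by
      simpa using (integral_add_right_eq_self (μ := volume) (fun y => a (y - h) * g y) h)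
    have i1 := hshift h
    have i2 : Integrable (fun x => a (x - h) * g x) := by
      simpa using (hshift h).comp_sub_right h
    calc (∫ x : ℝ, a x * ((g (x + h) - g x) / h))
        = ∫ x : ℝ, h⁻¹ * (a x * g (x + h) - a x * g x) := by
          congr 1; funext x; ring
      _ = h⁻¹ * ∫ x : ℝ, (a x * g (x + h) - a x * g x) := integral_const_mul _ _
      _ = h⁻¹ * ((∫ x : ℝ, a x * g (x + h)) - ∫ x : ℝ, a x * g x) := by
          rw [integral_sub i1 hI0]
      _ = h⁻¹ * ((∫ x : ℝ, a (x - h) * g x) - ∫ x : ℝ, a x * g x) := by rw [e1]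
      _ = h⁻¹ * ∫ x : ℝ, (a (x - h) * g x - a x * g x) := by rw [integral_sub i2 hI0]
      _ = ∫ x : ℝ, h⁻¹ * (a (x - h) * g x - a x * g x) := (integral_const_mul _ _).symm
      _ = ∫ x : ℝ, ((a (x - h) - a x) / h) * g x := by congr 1; funext x; ring
  -- Step C : limit of the right-hand side
  have hC1 : Tendsto (fun h : ℝ => ∫ x : ℝ, ((a (x - h) - a x) / h) * g x) (𝓝[≠] (0:ℝ))
      (𝓝 (∫ x : ℝ, -(deriv a x) * g x)) := by
    apply tendsto_integral_filter_of_dominated_convergence (fun x => (K : ℝ) * ‖g x‖)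
    · filter_upwards with h
      exact ((((hca.comp (continuous_id.sub continuous_const)).sub hca).div_const _).mul
        hcg).aestronglyMeasurable
    · filter_upwards [self_mem_nhdsWithin] with h hh
      filter_upwards with x
      have hq : ‖a (x - h) - a x‖ ≤ (K : ℝ) * ‖h‖ := by
        have := ha.norm_sub_le (x - h) x
        simpa using this
      have hh0 : h ≠ 0 := hh
      rw [norm_mul, norm_div]
      have : ‖a (x - h) - a x‖ / ‖h‖ ≤ (K : ℝ) := by
        rw [div_le_iff₀ (by simpa using hh0)]
        simpa using hq
      exact mul_le_mul_of_nonneg_right this (norm_nonneg _)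
    · exact hgi.norm.const_mul _
    · filter_upwards [ha.ae_differentiableAt] with x hx
      exact (tt_aside a x hx).mul_const (g x)
  -- Step D : limit of the left-hand side
  have hC0 : (0:ℝ) ≤ C := le_trans (by positivity) (hC 0)
  set M : ℝ := (‖a 0‖ + (K : ℝ)) * (8 * C) with hM
  have hD : Tendsto (fun h : ℝ => ∫ x : ℝ, a x * ((g (x + h) - g x) / h)) (𝓝[≠] (0:ℝ))
      (𝓝 (∫ x : ℝ, a x * deriv g x)) := by
    apply tendsto_integral_filter_of_dominated_convergence
      (fun x => M * ((1 + ‖x‖) ^ 2)⁻¹)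
    · filter_upwards with h
      exact (hca.mul (((hcg.comp (continuous_id.add continuous_const)).sub
        hcg).div_const _)).aestronglyMeasurable
    · have hev : ∀ᶠ h : ℝ in 𝓝[≠] (0:ℝ), ‖h‖ ≤ 1 ∧ h ≠ 0 := by
        have h1 : ∀ᶠ h : ℝ in 𝓝 (0:ℝ), ‖h‖ ≤ 1 := by
          have := Metric.closedBall_mem_nhds (0:ℝ) (by norm_num : (0:ℝ) < 1)
          filter_upwards [this] with h hh
          simpa [Real.norm_eq_abs, Real.dist_eq] using hh
        filter_upwards [eventually_nhdsWithin_of_eventually_nhds h1,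
          self_mem_nhdsWithin] with h hh1 hh2
        exact ⟨hh1, hh2⟩
      filter_upwards [hev] with h hh
      obtain ⟨hh1, hh0⟩ := hh
      filter_upwards with x
      have hxpos : (0:ℝ) < 1 + ‖x‖ := by positivity
      -- derivative bound on the ball of radius 1 around x
      have hder : ∀ y ∈ Metric.closedBall x 1, ‖deriv g y‖ ≤ 8 * C / (1 + ‖x‖) ^ 3 := by
        intro y hy
        have hxy : ‖y - x‖ ≤ 1 := by
          simpa [Real.dist_eq, Real.norm_eq_abs] using Metric.mem_closedBall.1 hy
        have h1 : 1 + ‖x‖ ≤ 2 * (1 + ‖y‖) := by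
          have := norm_sub_norm_le x y
          have h2 : ‖x - y‖ ≤ 1 := by
            have : x - y = -(y - x) := by ring
            rw [this, norm_neg]; exact hxy
          linarith [norm_nonneg y]
        have hypos : (0:ℝ) < 1 + ‖y‖ := by positivity
        have h3 : (1 + ‖x‖) ^ 3 ≤ 8 * (1 + ‖y‖) ^ 3 := by
          calc (1 + ‖x‖) ^ 3 ≤ (2 * (1 + ‖y‖)) ^ 3 := by gcongr
            _ = 8 * (1 + ‖y‖) ^ 3 := by ring
        have h4 := hC y
        rw [le_div_iff₀ (by positivity : (0:ℝ) < (1 + ‖x‖) ^ 3)]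
        nlinarith [mul_le_mul_of_nonneg_left h3 (norm_nonneg (deriv g y)), h4]
      have hmvt : ‖g (x + h) - g x‖ ≤ (8 * C / (1 + ‖x‖) ^ 3) * ‖(x + h) - x‖ := by
        refine Convex.norm_image_sub_le_of_norm_deriv_le
          (fun y _ => hg y) hder (convex_closedBall x 1) ?_ ?_
        · simp
        · simpa [Real.dist_eq, Real.norm_eq_abs] using hh1
      have hquot : ‖(g (x + h) - g x) / h‖ ≤ 8 * C / (1 + ‖x‖) ^ 3 := by
        rw [norm_div, div_le_iff₀ (by simpa using hh0)]
        calc ‖g (x + h) - g x‖ ≤ (8 * C / (1 + ‖x‖) ^ 3) * ‖(x + h) - x‖ := hmvt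
          _ = 8 * C / (1 + ‖x‖) ^ 3 * ‖h‖ := by congr 1; simp
      have hax : ‖a x‖ ≤ (‖a 0‖ + (K : ℝ)) * (1 + ‖x‖) := by
        have := tt_lin_growth K ha x
        have hK : (0:ℝ) ≤ (K : ℝ) := K.coe_nonneg
        nlinarith [norm_nonneg (a 0), norm_nonneg x]
      rw [norm_mul]
      calc ‖a x‖ * ‖(g (x + h) - g x) / h‖
          ≤ ((‖a 0‖ + (K : ℝ)) * (1 + ‖x‖)) * (8 * C / (1 + ‖x‖) ^ 3) := by
            apply mul_le_mul hax hquot (norm_nonneg _)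
            positivity
        _ = M * ((1 + ‖x‖) ^ 2)⁻¹ := by
            rw [hM]; field_simp
    · -- integrability of the dominating function
      have hint : Integrable (fun x : ℝ => (1 + ‖x‖) ^ (-(2:ℝ))) := by
        apply integrable_one_add_norm (E := ℝ)
        norm_num
      have : Integrable (fun x : ℝ => M * (1 + ‖x‖) ^ (-(2:ℝ))) := hint.const_mul _
      refine this.congr (Eventually.of_forall fun x => ?_)
      have hxpos : (0:ℝ) < 1 + ‖x‖ := by positivity
      have hrw : ((1:ℝ) + ‖x‖) ^ (-(2:ℝ)) = (((1:ℝ) + ‖x‖) ^ (2:ℕ))⁻¹ := by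
        rw [Real.rpow_neg hxpos.le, ← Real.rpow_natCast (1 + ‖x‖) 2]
        norm_num
      simp only [hrw]
    · filter_upwards with x
      exact (tt_gside g x (hg x)).const_mul (a x)
  -- conclude
  have hD' : Tendsto (fun h : ℝ => ∫ x : ℝ, ((a (x - h) - a x) / h) * g x) (𝓝[≠] (0:ℝ))
      (𝓝 (∫ x : ℝ, a x * deriv g x)) := hD.congr fun h => hBeq h
  have hmain : (∫ x : ℝ, a x * deriv g x) = ∫ x : ℝ, -(deriv a x) * g x :=
    tendsto_nhds_unique hD' hC1
  rw [hmain, ← integral_neg]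
  congr 1; funext x; ring

/-- Integration by parts for the transport term: for `a`
Lipschitz and `v` Schwartz, `∫ a v v' = -(1/2) ∫ a' v²`. -/
theorem transport_term_integration_by_parts (K : ℝ≥0) (a : ℝ → ℝ)
    (ha : LipschitzWith K a) (v : SchwartzMap ℝ ℝ) :
    ∫ x : ℝ, a x * v x * deriv (⇑v) x = -(1/2) * ∫ x : ℝ, deriv a x * v x ^ 2 := by
  classical
  set g : ℝ → ℝ := fun x => v x ^ 2 with hgdef
  have hvd : Differentiable ℝ (⇑v) := v.differentiable
  have hg : Differentiable ℝ g := by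
    exact fun x => ((hvd x).pow 2)
  have hderiv : ∀ x : ℝ, deriv g x = 2 * v x * deriv (⇑v) x := by
    intro x
    have h := ((hvd x).hasDerivAt.pow 2)
    show deriv (⇑v ^ 2) x = _
    simpa [hgdef] using h.deriv
  -- the derivative of v, as a Schwartz map
  set v' : SchwartzMap ℝ ℝ := SchwartzMap.derivCLM ℝ ℝ v with hv'
  have hv'app : ∀ x, v' x = deriv (⇑v) x := fun x => rfl
  -- decay bounds
  obtain ⟨B₂, hB₂pos, hB₂⟩ := v'.decay 0 0
  have hB₂' : ∀ x : ℝ, ‖deriv (⇑v) x‖ ≤ B₂ := by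
    intro x
    have := hB₂ x
    simpa [norm_iteratedFDeriv_zero, hv'app] using this
  obtain ⟨B₀, hB₀pos, hB₀⟩ := v.decay 0 0
  have hB₀' : ∀ x : ℝ, ‖v x‖ ≤ B₀ := by
    intro x
    have := hB₀ x
    simpa [norm_iteratedFDeriv_zero] using this
  have hB₁ : ∀ x : ℝ, (1 + ‖x‖) ^ 3 * ‖v x‖ ≤
      2 ^ 3 * (Finset.Iic ((3:ℕ), (0:ℕ))).sup
        (fun m => SchwartzMap.seminorm ℝ m.1 m.2) v := by
    intro x
    have := SchwartzMap.one_add_le_sup_seminorm_apply (𝕜 := ℝ) (m := ((3:ℕ), (0:ℕ)))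
      le_rfl le_rfl v x
    simpa [norm_iteratedFDeriv_zero] using this
  set B₁ : ℝ := 2 ^ 3 * (Finset.Iic ((3:ℕ), (0:ℕ))).sup
      (fun m => SchwartzMap.seminorm ℝ m.1 m.2) v with hB₁def
  have hCdecay : ∀ x : ℝ, (1 + ‖x‖) ^ 3 * ‖deriv g x‖ ≤ 2 * B₁ * B₂ := by
    intro x
    rw [hderiv x]
    have h1 : ‖(2:ℝ) * v x * deriv (⇑v) x‖ = 2 * ‖v x‖ * ‖deriv (⇑v) x‖ := by
      rw [norm_mul, norm_mul]; norm_num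
    rw [h1]
    have hx1 : (0:ℝ) ≤ (1 + ‖x‖) ^ 3 := by positivity
    calc (1 + ‖x‖) ^ 3 * (2 * ‖v x‖ * ‖deriv (⇑v) x‖)
        = 2 * ((1 + ‖x‖) ^ 3 * ‖v x‖) * ‖deriv (⇑v) x‖ := by ring
      _ ≤ 2 * B₁ * B₂ := by
          have h2 := hB₁ x
          have h3 := hB₂' x
          have h4 : (0:ℝ) ≤ (1 + ‖x‖) ^ 3 * ‖v x‖ := by positivity
          nlinarith [norm_nonneg (deriv (⇑v) x)]
  -- integrability of g and ‖x‖ * ‖g x‖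
  have hgc : Continuous g := hg.continuous
  have hgi : Integrable g := by
    refine ((v.integrable (μ := volume)).norm.const_mul B₀).mono'
      hgc.aestronglyMeasurable ?_
    filter_upwards with x
    have : ‖g x‖ = ‖v x‖ * ‖v x‖ := by
      simp [hgdef, pow_two, abs_mul]
    rw [this]
    exact mul_le_mul_of_nonneg_right (hB₀' x) (norm_nonneg _)
  have hgi1 : Integrable (fun x => ‖x‖ * ‖g x‖) := by
    have hint := v.integrable_pow_mul (μ := volume) 1
    refine ((hint.const_mul B₀).mono' ?_ ?_)
    · exact (continuous_norm.mul hgc.norm).aestronglyMeasurable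
    · filter_upwards with x
      have h1 : ‖g x‖ = ‖v x‖ * ‖v x‖ := by simp [hgdef, pow_two, abs_mul]
      have h2 : ‖‖x‖ * ‖g x‖‖ = ‖x‖ * ‖g x‖ := Real.norm_of_nonneg (by positivity)
      rw [h2, h1]
      calc ‖x‖ * (‖v x‖ * ‖v x‖) ≤ ‖x‖ * (B₀ * ‖v x‖) := by
            apply mul_le_mul_of_nonneg_left _ (norm_nonneg x)
            exact mul_le_mul_of_nonneg_right (hB₀' x) (norm_nonneg _)
        _ = B₀ * (‖x‖ ^ 1 * ‖v x‖) := by ring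
  have key := tt_key K a ha g hg hCdecay hgi hgi1
  have e2 : (∫ x : ℝ, a x * deriv g x) = 2 * ∫ x : ℝ, a x * v x * deriv (⇑v) x := by
    rw [← integral_const_mul]
    congr 1; funext x
    rw [hderiv x]; ring
  have e3 : (∫ x : ℝ, deriv a x * g x) = ∫ x : ℝ, deriv a x * v x ^ 2 := rfl
  rw [e2, e3] at key
  linarith
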